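/- Define K_n := ∫_0^∞ (ln(1+x))^n e^{-x} dx for n ≥ 1. Then K_n^{1/n} = (ln(n+1)) · (1 + o(1)) as n → ∞; that is, the quotient K_n^{1/n} / ln(n+1) tends to 1 as n → ∞. -/

import Mathlib

open MeasureTheory Filter Topology Real Set


lemma f_contOn (n : ℕ) : ContinuousOn (fun x : ℝ => (Real.log (1 + x)) ^ n * Real.exp (-x)) (Set.Ioi 0) := by
  intro x hx
  have h1 : (1:ℝ) + x ≠ 0 := by simp only [Set.mem_Ioi] at hx; positivity
  apply ContinuousAt.continuousWithinAt
  exact (((Real.continuousAt_log h1).comp (by fun_prop)).pow n).mul (by fun_prop)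

lemma f_integrable (n : ℕ) :
    IntegrableOn (fun x : ℝ => (Real.log (1 + x)) ^ n * Real.exp (-x)) (Set.Ioi 0) := by
  have hg : IntegrableOn (fun x : ℝ => Real.exp (-x) * x ^ ((n + 1 : ℝ) - 1)) (Set.Ioi 0) :=
    Real.GammaIntegral_convergent (by positivity)
  refine MeasureTheory.Integrable.mono hg ((f_contOn n).aestronglyMeasurable measurableSet_Ioi) ?_
  filter_upwards [ae_restrict_mem measurableSet_Ioi] with x hx
  have hx0 : (0:ℝ) < x := hx
  have hlog : 0 ≤ Real.log (1 + x) := Real.log_nonneg (by linarith)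
  have hle : Real.log (1 + x) ≤ x := by
    have := Real.log_le_sub_one_of_pos (show (0:ℝ) < 1 + x by linarith)
    linarith
  rw [Real.norm_eq_abs, Real.norm_eq_abs, abs_of_nonneg (by positivity),
    abs_of_nonneg (by positivity)]
  have : x ^ ((n + 1 : ℝ) - 1) = x ^ n := by
    rw [add_sub_cancel_right, Real.rpow_natCast]
  rw [this, mul_comm (Real.exp (-x))]
  exact mul_le_mul_of_nonneg_right (pow_le_pow_left₀ hlog hle n) (Real.exp_nonneg _)

lemma f_nonneg_ae (n : ℕ) :
    0 ≤ᵐ[volume.restrict (Set.Ioi (0:ℝ))] fun x : ℝ => (Real.log (1 + x)) ^ n * Real.exp (-x) := by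
  filter_upwards [ae_restrict_mem measurableSet_Ioi] with x hx
  have hx0 : (0:ℝ) < x := hx
  have hlog : 0 ≤ Real.log (1 + x) := Real.log_nonneg (by linarith)
  positivity

lemma K_lower (n : ℕ) {t : ℝ} (ht : 0 ≤ t) :
    (Real.log (1 + t)) ^ n * Real.exp (-(t + 1)) ≤
      ∫ x in Set.Ioi (0:ℝ), (Real.log (1 + x)) ^ n * Real.exp (-x) := by
  have hsub : Set.Ioc t (t+1) ⊆ Set.Ioi (0:ℝ) := fun x hx => lt_of_le_of_lt ht hx.1
  have hint : IntegrableOn (fun x : ℝ => (Real.log (1 + x)) ^ n * Real.exp (-x))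
      (Set.Ioc t (t+1)) := (f_integrable n).mono_set hsub
  have h1 : (Real.log (1 + t)) ^ n * Real.exp (-(t + 1)) ≤
      ∫ x in Set.Ioc t (t+1), (Real.log (1 + x)) ^ n * Real.exp (-x) := by
    have := setIntegral_ge_of_const_le (c := (Real.log (1 + t)) ^ n * Real.exp (-(t + 1)))
      measurableSet_Ioc (by simp [Real.volume_Ioc]) ?_ hint
    · simpa [Real.volume_Ioc] using this
    · intro x hx
      have hx1 : t < x := hx.1
      have hx2 : x ≤ t + 1 := hx.2
      have hlogt : 0 ≤ Real.log (1 + t) := Real.log_nonneg (by linarith)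
      have hlog_le : Real.log (1 + t) ≤ Real.log (1 + x) :=
        Real.log_le_log (by linarith) (by linarith)
      have hexp : Real.exp (-(t + 1)) ≤ Real.exp (-x) := Real.exp_le_exp.2 (by linarith)
      exact mul_le_mul (pow_le_pow_left₀ hlogt hlog_le n) hexp (Real.exp_nonneg _)
        (pow_nonneg (hlogt.trans hlog_le) n)
  refine h1.trans ?_
  exact setIntegral_mono_set (f_integrable n) (f_nonneg_ae n) (HasSubset.Subset.eventuallyLE hsub)

lemma exp_half_integral {A : ℝ} :
    (∫ x in Set.Ioi A, Real.exp (-x/2)) = 2 * Real.exp (-A/2) := by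
  have h := integral_comp_mul_left_Ioi (fun y => Real.exp (-y)) A
    (show (0:ℝ) < 1/2 by norm_num)
  have e1 : (fun x : ℝ => Real.exp (-x/2)) = fun x : ℝ => Real.exp (-(1/2 * x)) := by
    funext x; ring_nf
  rw [e1, h, integral_exp_neg_Ioi, smul_eq_mul, show -(1/2*A) = -A/2 by ring]
  norm_num

lemma exp_half_integrable {A : ℝ} : IntegrableOn (fun x : ℝ => Real.exp (-x/2)) (Set.Ioi A) := by
  have := exp_neg_integrableOn_Ioi A (show (0:ℝ) < 1/2 by norm_num)
  refine this.congr_fun ?_ measurableSet_Ioi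
  intro x _; ring_nf

lemma K_upper (n : ℕ) {A : ℝ} (hA1 : 1 ≤ A) (hA2 : 2 * (n:ℝ) ≤ A) :
    (∫ x in Set.Ioi (0:ℝ), (Real.log (1 + x)) ^ n * Real.exp (-x)) ≤
      (Real.log (1 + A)) ^ n + 2 * A ^ n * Real.exp (-A/2) := by
  have hA0 : (0:ℝ) < A := by linarith
  have hsplit : Set.Ioc (0:ℝ) A ∪ Set.Ioi A = Set.Ioi 0 := Set.Ioc_union_Ioi_eq_Ioi hA0.le
  have hint1 : IntegrableOn (fun x : ℝ => (Real.log (1 + x)) ^ n * Real.exp (-x))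
      (Set.Ioc 0 A) := (f_integrable n).mono_set Set.Ioc_subset_Ioi_self
  have hint2 : IntegrableOn (fun x : ℝ => (Real.log (1 + x)) ^ n * Real.exp (-x))
      (Set.Ioi A) := (f_integrable n).mono_set (Set.Ioi_subset_Ioi hA0.le)
  rw [← hsplit, setIntegral_union Set.Ioc_disjoint_Ioi_same measurableSet_Ioi hint1 hint2]
  have part1 : (∫ x in Set.Ioc (0:ℝ) A, (Real.log (1 + x)) ^ n * Real.exp (-x)) ≤
      (Real.log (1 + A)) ^ n := by
    have hmono : (∫ x in Set.Ioc (0:ℝ) A, (Real.log (1 + x)) ^ n * Real.exp (-x)) ≤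
        ∫ x in Set.Ioc (0:ℝ) A, (Real.log (1 + A)) ^ n * Real.exp (-x) := by
      refine setIntegral_mono_on hint1 ?_ measurableSet_Ioc ?_
      · exact (Integrable.const_mul ((exp_neg_integrableOn_Ioi (0:ℝ) one_pos).congr_fun
          (fun x _ => by norm_num) measurableSet_Ioi |>.mono_set Set.Ioc_subset_Ioi_self) _)
      · intro x hx
        have hlog : 0 ≤ Real.log (1 + x) := Real.log_nonneg (by linarith [hx.1])
        have : Real.log (1 + x) ≤ Real.log (1 + A) := Real.log_le_log (by linarith [hx.1]) (by linarith [hx.2])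
        exact mul_le_mul_of_nonneg_right (pow_le_pow_left₀ hlog this n) (Real.exp_nonneg _)
    refine hmono.trans ?_
    rw [MeasureTheory.integral_const_mul]
    have hlogA : 0 ≤ Real.log (1 + A) := Real.log_nonneg (by linarith)
    have h1 : (∫ x in Set.Ioc (0:ℝ) A, Real.exp (-x)) ≤ 1 := by
      rw [← integral_exp_neg_Ioi_zero]
      refine setIntegral_mono_set ((exp_neg_integrableOn_Ioi (0:ℝ) one_pos).congr_fun
        (fun x _ => by norm_num) measurableSet_Ioi) ?_
        (HasSubset.Subset.eventuallyLE Set.Ioc_subset_Ioi_self)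
      filter_upwards with x using Real.exp_nonneg _
    calc (Real.log (1+A))^n * ∫ x in Set.Ioc (0:ℝ) A, Real.exp (-x)
        ≤ (Real.log (1+A))^n * 1 := mul_le_mul_of_nonneg_left h1 (pow_nonneg hlogA n)
      _ = (Real.log (1+A))^n := mul_one _
  have part2 : (∫ x in Set.Ioi A, (Real.log (1 + x)) ^ n * Real.exp (-x)) ≤
      2 * A ^ n * Real.exp (-A/2) := by
    have hptwise : ∀ x ∈ Set.Ioi A, (Real.log (1 + x)) ^ n * Real.exp (-x) ≤
        (A ^ n * Real.exp (-A/2)) * Real.exp (-x/2) := by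
      intro x hx
      have hxA : A < x := hx
      have hx0 : (0:ℝ) < x := lt_trans hA0 hxA
      have hlog : 0 ≤ Real.log (1 + x) := Real.log_nonneg (by linarith)
      have hle : Real.log (1 + x) ≤ x := by
        have := Real.log_le_sub_one_of_pos (show (0:ℝ) < 1 + x by linarith); linarith
      have h1 : (Real.log (1 + x)) ^ n * Real.exp (-x) ≤ x ^ n * Real.exp (-x) :=
        mul_le_mul_of_nonneg_right (pow_le_pow_left₀ hlog hle n) (Real.exp_nonneg _)
      refine h1.trans ?_
      have hxpow : x ^ n * Real.exp (-x) = Real.exp ((n:ℝ) * Real.log x - x) := by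
        rw [sub_eq_add_neg, Real.exp_add, Real.exp_nat_mul, Real.exp_log hx0]
      have hApow : A ^ n * Real.exp (-A/2) * Real.exp (-x/2) =
          Real.exp ((n:ℝ) * Real.log A - A/2 - x/2) := by
        rw [show (n:ℝ) * Real.log A - A/2 - x/2 = ((n:ℝ) * Real.log A + (-A/2)) + (-x/2) by ring,
          Real.exp_add, Real.exp_add, Real.exp_nat_mul, Real.exp_log hA0]
      rw [hxpow, hApow]
      apply Real.exp_le_exp.2
      have hlogx : Real.log x ≤ Real.log A + (x - A)/A := by
        have h := Real.log_le_sub_one_of_pos (show (0:ℝ) < x/A by positivity)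
        rw [Real.log_div hx0.ne' hA0.ne'] at h
        have : x/A - 1 = (x - A)/A := by field_simp
        linarith [this ▸ h]
      have hn : (n:ℝ) * ((x - A)/A) ≤ (x - A)/2 := by
        rw [mul_div_assoc', div_le_div_iff₀ hA0 (by norm_num : (0:ℝ) < 2)]
        nlinarith [sub_nonneg.2 hxA.le]
      nlinarith [(Nat.cast_nonneg n : (0:ℝ) ≤ n), sub_nonneg.2 hxA.le]
    calc (∫ x in Set.Ioi A, (Real.log (1 + x)) ^ n * Real.exp (-x))
        ≤ ∫ x in Set.Ioi A, (A ^ n * Real.exp (-A/2)) * Real.exp (-x/2) :=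
          setIntegral_mono_on hint2 ((exp_half_integrable).const_mul _) measurableSet_Ioi hptwise
      _ = (A ^ n * Real.exp (-A/2)) * (2 * Real.exp (-A/2)) := by
          rw [MeasureTheory.integral_const_mul, exp_half_integral]
      _ ≤ 2 * A ^ n * Real.exp (-A/2) := by
          have h2 : Real.exp (-A/2) ≤ 1 := Real.exp_le_one_iff.2 (by linarith)
          nlinarith [mul_nonneg (mul_nonneg (pow_nonneg hA0.le n) (Real.exp_nonneg (-A/2))) (sub_nonneg.2 h2), mul_nonneg (pow_nonneg hA0.le n) (Real.exp_nonneg (-A/2))]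
  linarith


lemma hLtop : Tendsto (fun n : ℕ => Real.log ((n:ℝ) + 1)) atTop atTop :=
  Real.tendsto_log_atTop.comp (tendsto_atTop_add_const_right _ 1 tendsto_natCast_atTop_atTop)

lemma hlogdiv : Tendsto (fun n : ℕ =>
    Real.log (Real.log ((n:ℝ) + 1)) / Real.log ((n:ℝ) + 1)) atTop (𝓝 0) :=
  (Real.isLittleO_log_id_atTop.tendsto_div_nhds_zero).comp hLtop

lemma h1n : Tendsto (fun n : ℕ =>
    Real.log (1 + 1/(n:ℝ)) / Real.log ((n:ℝ) + 1)) atTop (𝓝 0) := by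
  have h0 : Tendsto (fun n : ℕ => 1 + 1/(n:ℝ)) atTop (𝓝 1) := by
    have : Tendsto (fun n : ℕ => 1 + 1/(n:ℝ)) atTop (𝓝 (1 + 0)) :=
      tendsto_const_nhds.add tendsto_one_div_atTop_nhds_zero_nat
    simpa using this
  have hnum : Tendsto (fun n : ℕ => Real.log (1 + 1/(n:ℝ))) atTop (𝓝 (Real.log 1)) :=
    ((Real.continuousAt_log one_ne_zero).tendsto).comp h0
  have := Tendsto.div_atTop hnum hLtop
  simpa using this

lemma lower_ratio : Tendsto (fun n : ℕ =>
    Real.log (1 + (n:ℝ) / Real.log ((n:ℝ) + 1)) / Real.log ((n:ℝ) + 1)) atTop (𝓝 1) := by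
  have hg : Tendsto (fun n : ℕ => 1 - Real.log (1 + 1/(n:ℝ)) / Real.log ((n:ℝ) + 1)
      - Real.log (Real.log ((n:ℝ) + 1)) / Real.log ((n:ℝ) + 1)) atTop (𝓝 1) := by
    have := ((tendsto_const_nhds (x := (1:ℝ)) (f := atTop)).sub h1n).sub hlogdiv
    simpa using this
  refine tendsto_of_tendsto_of_tendsto_of_le_of_le' hg tendsto_const_nhds ?_ ?_
  · filter_upwards [hLtop.eventually_ge_atTop 1, eventually_ge_atTop 1] with n hL hn
    set L := Real.log ((n:ℝ) + 1) with hLd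
    have hL0 : (0:ℝ) < L := lt_of_lt_of_le one_pos hL
    have hn0 : (0:ℝ) < (n:ℝ) := by exact_mod_cast hn
    have key : L - Real.log (1 + 1/(n:ℝ)) - Real.log L ≤ Real.log (1 + (n:ℝ)/L) := by
      have h1 : Real.log ((n:ℝ)/L) ≤ Real.log (1 + (n:ℝ)/L) :=
        Real.log_le_log (by positivity) (by linarith)
      have h2 : Real.log ((n:ℝ)/L) = Real.log (n:ℝ) - Real.log L :=
        Real.log_div hn0.ne' hL0.ne'
      have h3 : Real.log (n:ℝ) = L - Real.log (1 + 1/(n:ℝ)) := by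
        have e : (1:ℝ) + 1/(n:ℝ) = ((n:ℝ)+1)/(n:ℝ) := by field_simp
        rw [e, Real.log_div (by positivity) hn0.ne', hLd]
        ring
      rw [h2, h3] at h1
      linarith
    have hdiv : (L - Real.log (1 + 1/(n:ℝ)) - Real.log L) / L
        = 1 - Real.log (1 + 1/(n:ℝ)) / L - Real.log L / L := by
      field_simp
    rw [← hdiv]
    gcongr
  · filter_upwards [hLtop.eventually_ge_atTop 1, eventually_ge_atTop 1] with n hL hn
    set L := Real.log ((n:ℝ) + 1) with hLd
    have hL0 : (0:ℝ) < L := lt_of_lt_of_le one_pos hL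
    rw [div_le_one hL0]
    have h1 : (n:ℝ)/L ≤ (n:ℝ) := div_le_self (Nat.cast_nonneg n) hL
    exact Real.log_le_log (by positivity) (by linarith)

lemma upper_ratio : Tendsto (fun n : ℕ =>
    Real.log (1 + (n:ℝ) * (Real.log ((n:ℝ) + 1))^2) / Real.log ((n:ℝ) + 1)) atTop (𝓝 1) := by
  have hg : Tendsto (fun n : ℕ => 1 + 2 * (Real.log (Real.log ((n:ℝ) + 1)) / Real.log ((n:ℝ) + 1)))
      atTop (𝓝 1) := by
    have := (tendsto_const_nhds (x := (1:ℝ)) (f := atTop)).add (hlogdiv.const_mul 2)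
    simpa using this
  refine tendsto_of_tendsto_of_tendsto_of_le_of_le' tendsto_const_nhds hg ?_ ?_
  · filter_upwards [hLtop.eventually_ge_atTop 1] with n hL
    set L := Real.log ((n:ℝ) + 1) with hLd
    have hL0 : (0:ℝ) < L := lt_of_lt_of_le one_pos hL
    rw [le_div_iff₀ hL0, one_mul]
    have h1 : (n:ℝ) ≤ (n:ℝ) * L^2 := by
      have hL2 : (1:ℝ) ≤ L^2 := by nlinarith
      nlinarith [mul_le_mul_of_nonneg_left hL2 (by positivity : (0:ℝ) ≤ (n:ℝ))]
    exact Real.log_le_log (by positivity) (by linarith)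
  · filter_upwards [hLtop.eventually_ge_atTop 1] with n hL
    set L := Real.log ((n:ℝ) + 1) with hLd
    have hL0 : (0:ℝ) < L := lt_of_lt_of_le one_pos hL
    rw [div_le_iff₀ hL0]
    have h1 : (1:ℝ) + (n:ℝ)*L^2 ≤ ((n:ℝ)+1) * L^2 := by
      have hL2 : (1:ℝ) ≤ L^2 := by nlinarith
      nlinarith
    have h2 : Real.log (((n:ℝ)+1) * L^2) = L + 2 * Real.log L := by
      rw [Real.log_mul (by positivity) (by positivity), Real.log_pow, hLd]
      push_cast; ring
    calc Real.log (1 + (n:ℝ)*L^2) ≤ Real.log (((n:ℝ)+1)*L^2) :=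
          Real.log_le_log (by positivity) h1
      _ = L + 2*Real.log L := h2
      _ = (1 + 2*(Real.log L/L)) * L := by field_simp

lemma two_rpow_lim : Tendsto (fun n : ℕ => (2:ℝ) ^ ((1:ℝ)/(n:ℝ))) atTop (𝓝 1) := by
  have h : ∀ n : ℕ, (2:ℝ) ^ ((1:ℝ)/(n:ℝ)) = Real.exp (Real.log 2 * (1/(n:ℝ))) := fun n =>
    Real.rpow_def_of_pos two_pos _
  simp only [h]
  have h2 : Tendsto (fun n : ℕ => Real.log 2 * (1/(n:ℝ))) atTop (𝓝 0) := by
    simpa using tendsto_one_div_atTop_nhds_zero_nat.const_mul (Real.log 2)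
  have := (Real.continuous_exp.tendsto 0).comp h2
  simpa [Function.comp_def] using this

lemma exp_factor_lim : Tendsto (fun n : ℕ =>
    Real.exp (-((n:ℝ)/Real.log ((n:ℝ) + 1) + 1) * (1/(n:ℝ)))) atTop (𝓝 1) := by
  have hexp0 : Tendsto (fun n : ℕ => -((n:ℝ)/Real.log ((n:ℝ) + 1) + 1) * (1/(n:ℝ))) atTop (𝓝 0) := by
    have heq : (fun n : ℕ => -(1/Real.log ((n:ℝ) + 1) + 1/(n:ℝ)))
        =ᶠ[atTop] fun n : ℕ => -((n:ℝ)/Real.log ((n:ℝ) + 1) + 1) * (1/(n:ℝ)) := by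
      filter_upwards [eventually_ge_atTop 1] with n hn
      have hn0 : ((n:ℝ)) ≠ 0 := by positivity
      by_cases hL : Real.log ((n:ℝ) + 1) = 0
      · rw [hL]; simp
      · field_simp
    refine Tendsto.congr' heq ?_
    have h1 : Tendsto (fun n : ℕ => 1/Real.log ((n:ℝ) + 1)) atTop (𝓝 0) := by
      have := tendsto_inv_atTop_zero.comp hLtop
      simpa [one_div, Function.comp_def] using this
    have := (h1.add tendsto_one_div_atTop_nhds_zero_nat).neg
    simpa using this
  have := (Real.continuous_exp.tendsto 0).comp hexp0
  simpa [Function.comp_def] using this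

lemma pow_rpow_inv_nat (c : ℝ) (hc : 0 ≤ c) {n : ℕ} (hn : n ≠ 0) :
    (c ^ n) ^ ((1:ℝ)/(n:ℝ)) = c := by
  rw [← Real.rpow_natCast c n, ← Real.rpow_mul hc, mul_one_div,
    div_self (by exact_mod_cast hn : (n:ℝ) ≠ 0), Real.rpow_one]

lemma exp_rpow' (a r : ℝ) : (Real.exp a) ^ r = Real.exp (a * r) := by
  rw [Real.rpow_def_of_pos (Real.exp_pos a), Real.log_exp]


/-- With `Kₙ = ∫_0^∞ (ln(1+x))ⁿ e^{-x} dx`, one has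
`Kₙ^{1/n} = ln(n+1) (1 + o(1))` as `n → ∞`, i.e. `Kₙ^{1/n} / ln(n+1) → 1`. -/
theorem K_root_asymptotics
    (K : ℕ → ℝ)
    (hK : ∀ n : ℕ, K n = ∫ x in Set.Ioi (0 : ℝ), (Real.log (1 + x)) ^ n * Real.exp (-x)) :
    Tendsto (fun n : ℕ => K n ^ ((1 : ℝ) / n) / Real.log (n + 1)) atTop (𝓝 1) := by
  have hKnn : ∀ n, 0 ≤ K n := by
    intro n; rw [hK n]
    apply setIntegral_nonneg measurableSet_Ioi
    intro x hx
    have hx0 : (0:ℝ) < x := hx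
    have hlg : 0 ≤ Real.log (1+x) := Real.log_nonneg (by linarith)
    positivity
  have hlow : ∀ᶠ n : ℕ in atTop,
      Real.log (1 + (n:ℝ)/Real.log ((n:ℝ)+1)) *
        Real.exp (-((n:ℝ)/Real.log ((n:ℝ)+1) + 1) * (1/(n:ℝ)))
        ≤ K n ^ ((1:ℝ)/(n:ℝ)) := by
    filter_upwards [hLtop.eventually_ge_atTop 1, eventually_ge_atTop 1] with n hL hn
    have hL0 : (0:ℝ) < Real.log ((n:ℝ)+1) := lt_of_lt_of_le one_pos hL
    set t := (n:ℝ)/Real.log ((n:ℝ)+1) with htd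
    have ht0 : 0 ≤ t := by positivity
    have hKl := K_lower n ht0
    rw [← hK n] at hKl
    have hc : 0 ≤ Real.log (1+t) := Real.log_nonneg (by linarith)
    have h := Real.rpow_le_rpow (mul_nonneg (pow_nonneg hc n) (Real.exp_nonneg _)) hKl
      (by positivity : (0:ℝ) ≤ 1/(n:ℝ))
    rwa [Real.mul_rpow (pow_nonneg hc n) (Real.exp_nonneg _),
      pow_rpow_inv_nat _ hc (by omega : n ≠ 0), exp_rpow'] at h
  have hup : ∀ᶠ n : ℕ in atTop, K n ^ ((1:ℝ)/(n:ℝ)) ≤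
      (2:ℝ)^((1:ℝ)/(n:ℝ)) * Real.log (1 + (n:ℝ) * (Real.log ((n:ℝ)+1))^2) := by
    filter_upwards [hLtop.eventually_ge_atTop 6,
      hlogdiv.eventually (gt_mem_nhds (by norm_num : (0:ℝ) < 1/2)),
      eventually_ge_atTop 1] with n hL hld hn
    set L := Real.log ((n:ℝ)+1) with hLd
    have hL0 : (0:ℝ) < L := by linarith
    have hn1 : (1:ℝ) ≤ (n:ℝ) := by exact_mod_cast hn
    set A := (n:ℝ) * L^2 with hAd
    have hA36 : (36:ℝ) ≤ A := by nlinarith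
    have hA1 : (1:ℝ) ≤ A := by linarith
    have hA2 : 2*(n:ℝ) ≤ A := by
      have h36 : (36:ℝ) ≤ L^2 := by nlinarith
      have := mul_le_mul_of_nonneg_left h36 (by positivity : (0:ℝ) ≤ (n:ℝ))
      nlinarith
    have hA0 : (0:ℝ) < A := by linarith
    have hKu := K_upper n hA1 hA2
    rw [← hK n] at hKu
    have hlogL : Real.log L < 1/2 * L := (div_lt_iff₀ hL0).1 hld
    have hlogA : Real.log A ≤ 2*L := by
      rw [hAd, Real.log_mul (by positivity) (by positivity), Real.log_pow]
      have hlogn : Real.log (n:ℝ) ≤ L := Real.log_le_log (by linarith) (by linarith)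
      push_cast
      linarith
    have htail : 2 * A^n * Real.exp (-A/2) ≤ 1 := by
      have heq : 2 * A^n * Real.exp (-A/2)
          = Real.exp (Real.log 2 + ((n:ℝ) * Real.log A + (-A/2))) := by
        rw [Real.exp_add, Real.exp_add, Real.exp_log two_pos, Real.exp_nat_mul, Real.exp_log hA0]
        ring
      rw [heq, Real.exp_le_one_iff]
      have hlog2 : Real.log 2 ≤ 1 := by
        have := Real.log_le_sub_one_of_pos (show (0:ℝ) < 2 by norm_num); linarith
      have hmul : (n:ℝ) * Real.log A ≤ (n:ℝ) * (2*L) :=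
        mul_le_mul_of_nonneg_left hlogA (by positivity)
      have h6 : (6:ℝ) ≤ (n:ℝ)*L := by nlinarith
      have hkey : (12:ℝ) ≤ (n:ℝ)*L*(L-4) := by nlinarith
      nlinarith
    set B := Real.log (1 + A) with hBd
    have hB1 : (1:ℝ) ≤ B := by
      rw [hBd, Real.le_log_iff_exp_le (by positivity)]
      have := Real.exp_one_lt_d9
      nlinarith
    have hKn2 : K n ≤ 2 * B^n := by
      have hBn : (1:ℝ) ≤ B^n := one_le_pow₀ hB1
      calc K n ≤ B^n + 2 * A^n * Real.exp (-A/2) := hKu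
        _ ≤ B^n + 1 := by linarith
        _ ≤ 2 * B^n := by linarith
    have h := Real.rpow_le_rpow (hKnn n) hKn2 (by positivity : (0:ℝ) ≤ 1/(n:ℝ))
    rwa [Real.mul_rpow (by norm_num) (pow_nonneg (by linarith) n),
      pow_rpow_inv_nat _ (by linarith : (0:ℝ) ≤ B) (by omega : n ≠ 0)] at h
  have hl1 : Tendsto (fun n : ℕ => (Real.log (1 + (n:ℝ)/Real.log ((n:ℝ)+1)) *
      Real.exp (-((n:ℝ)/Real.log ((n:ℝ)+1) + 1) * (1/(n:ℝ)))) / Real.log ((n:ℝ)+1))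
      atTop (𝓝 1) := by
    have heq : (fun n : ℕ => (Real.log (1 + (n:ℝ)/Real.log ((n:ℝ)+1)) *
        Real.exp (-((n:ℝ)/Real.log ((n:ℝ)+1) + 1) * (1/(n:ℝ)))) / Real.log ((n:ℝ)+1))
        = fun n : ℕ => (Real.log (1 + (n:ℝ)/Real.log ((n:ℝ)+1)) / Real.log ((n:ℝ)+1)) *
          Real.exp (-((n:ℝ)/Real.log ((n:ℝ)+1) + 1) * (1/(n:ℝ))) := by
      funext n; ring
    rw [heq]
    simpa using lower_ratio.mul exp_factor_lim
  have hu1 : Tendsto (fun n : ℕ => ((2:ℝ)^((1:ℝ)/(n:ℝ)) *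
      Real.log (1 + (n:ℝ)*(Real.log ((n:ℝ)+1))^2)) / Real.log ((n:ℝ)+1)) atTop (𝓝 1) := by
    have heq : (fun n : ℕ => ((2:ℝ)^((1:ℝ)/(n:ℝ)) *
        Real.log (1 + (n:ℝ)*(Real.log ((n:ℝ)+1))^2)) / Real.log ((n:ℝ)+1))
        = fun n : ℕ => (2:ℝ)^((1:ℝ)/(n:ℝ)) *
          (Real.log (1 + (n:ℝ)*(Real.log ((n:ℝ)+1))^2) / Real.log ((n:ℝ)+1)) := by
      funext n; ring
    rw [heq]
    simpa using two_rpow_lim.mul upper_ratio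
  refine tendsto_of_tendsto_of_tendsto_of_le_of_le' hl1 hu1 ?_ ?_
  · filter_upwards [hlow, hLtop.eventually_ge_atTop 1] with n h hL
    have hL0 : (0:ℝ) < Real.log ((n:ℝ)+1) := lt_of_lt_of_le one_pos hL
    gcongr
  · filter_upwards [hup, hLtop.eventually_ge_atTop 1] with n h hL
    have hL0 : (0:ℝ) < Real.log ((n:ℝ)+1) := lt_of_lt_of_le one_pos hL
    gcongr
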